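/- For every finite simple graph G, the following three assertions are equivalent: (i) every connected induced subgraph H of G with at least one edge satisfies τ_c(H) = τ(H); (ii) G contains no induced subgraph isomorphic to P_5, C_5, or C_4; (iii) G is chordal and contains no induced subgraph isomorphic to P_5. -/

import Mathlib

open SimpleGraph

/-- `C` is a vertex cover of `G`: every edge of `G` has an endpoint in `C`. -/
def IsVertexCover {V : Type} (G : SimpleGraph V) (C : Set V) : Prop :=
  ∀ ⦃u v : V⦄, G.Adj u v → u ∈ C ∨ v ∈ C

/-- `C` is a connected vertex cover of `G`: a vertex cover inducing a connected subgraph. -/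
def IsConnectedVertexCover {V : Type} (G : SimpleGraph V) (C : Set V) : Prop :=
  _root_.IsVertexCover G C ∧ (G.induce C).Connected

/-- The vertex cover number `τ(G)`. -/
noncomputable def tau {V : Type} (G : SimpleGraph V) : ℕ :=
  sInf {n | ∃ C : Set V, _root_.IsVertexCover G C ∧ C.ncard = n}

/-- The connected vertex cover number `τ_c(G)`. -/
noncomputable def tauc {V : Type} (G : SimpleGraph V) : ℕ :=
  sInf {n | ∃ C : Set V, IsConnectedVertexCover G C ∧ C.ncard = n}

/-- `G` is `H`-free: `G` has no induced subgraph isomorphic to `H`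
(equivalently, there is no graph embedding of `H` into `G`). -/
def HFree {W V : Type} (H : SimpleGraph W) (G : SimpleGraph V) : Prop :=
  IsEmpty (H ↪g G)

/-- `G` is chordal: it contains no induced cycle of length at least 4. -/
def Chordal {V : Type} (G : SimpleGraph V) : Prop :=
  ∀ k : ℕ, 4 ≤ k → HFree (SimpleGraph.cycleGraph k) G

section Aux
variable {V : Type} {G : SimpleGraph V}

lemma hfree_induce {W : Type} {K : SimpleGraph W} (h : HFree K G) (S : Set V) :
    HFree K (G.induce S) :=
  ⟨fun f => h.false ((SimpleGraph.Embedding.induce S).comp f)⟩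

lemma hfree_of_embedding {W U : Type} {K : SimpleGraph W} {L : SimpleGraph U}
    (e : L ↪g K) (h : HFree L G) : HFree K G :=
  ⟨fun f => h.false (f.comp e)⟩

lemma reach_mono {C D : Set V} (hCD : C ⊆ D) {u v : V} (hu : u ∈ C) (hv : v ∈ C)
    (h : (G.induce C).Reachable ⟨u, hu⟩ ⟨v, hv⟩) :
    (G.induce D).Reachable ⟨u, hCD hu⟩ ⟨v, hCD hv⟩ :=
  h.map (G.induceHomOfLE hCD).toHom

/-- vertex with no neighbours in a graph reaches only itself -/
lemma eq_of_reachable_of_isolated {W : Type} {H : SimpleGraph W} {u v : W}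
    (hiso : ∀ w, ¬ H.Adj u w) (h : H.Reachable u v) : u = v := by
  obtain ⟨w⟩ := h
  cases w with
  | nil => rfl
  | cons h p => exact absurd h (hiso _)

end Aux

section EmbCons
variable {V : Type} {H : SimpleGraph V}

lemma p5_embedding (v0 v1 v2 v3 v4 : V)
    (a01 : H.Adj v0 v1) (a12 : H.Adj v1 v2) (a23 : H.Adj v2 v3) (a34 : H.Adj v3 v4)
    (n02 : ¬ H.Adj v0 v2) (n03 : ¬ H.Adj v0 v3) (n04 : ¬ H.Adj v0 v4)
    (n13 : ¬ H.Adj v1 v3) (n14 : ¬ H.Adj v1 v4) (n24 : ¬ H.Adj v2 v4) :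
    Nonempty (pathGraph 5 ↪g H) := by
  have e01 : v0 ≠ v1 := a01.ne
  have e12 : v1 ≠ v2 := a12.ne
  have e23 : v2 ≠ v3 := a23.ne
  have e34 : v3 ≠ v4 := a34.ne
  have e02 : v0 ≠ v2 := fun h => n03 (h ▸ a23)
  have e03 : v0 ≠ v3 := fun h => n04 (h ▸ a34)
  have e04 : v0 ≠ v4 := fun h => n03 (h ▸ a34.symm)
  have e13 : v1 ≠ v3 := fun h => n03 (h ▸ a01)
  have e14 : v1 ≠ v4 := fun h => n04 (h ▸ a01)
  have e24 : v2 ≠ v4 := fun h => n14 (h ▸ a12)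
  refine ⟨⟨⟨![v0, v1, v2, v3, v4], ?_⟩, ?_⟩⟩
  · intro i j hij
    fin_cases i <;> fin_cases j <;> simp_all
  · intro i j
    fin_cases i <;> fin_cases j <;>
      simp (config := { decide := true }) [pathGraph_adj] <;>
      first
        | exact a01 | exact a12 | exact a23 | exact a34
        | exact a01.symm | exact a12.symm | exact a23.symm | exact a34.symm
        | exact n02 | exact n03 | exact n04 | exact n13 | exact n14 | exact n24
        | exact fun h => n02 h.symm | exact fun h => n03 h.symm
        | exact fun h => n04 h.symm | exact fun h => n13 h.symm
        | exact fun h => n14 h.symm | exact fun h => n24 h.symm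

lemma c5_embedding (v0 v1 v2 v3 v4 : V)
    (a01 : H.Adj v0 v1) (a12 : H.Adj v1 v2) (a23 : H.Adj v2 v3) (a34 : H.Adj v3 v4)
    (a40 : H.Adj v4 v0)
    (n02 : ¬ H.Adj v0 v2) (n03 : ¬ H.Adj v0 v3)
    (n13 : ¬ H.Adj v1 v3) (n14 : ¬ H.Adj v1 v4) (n24 : ¬ H.Adj v2 v4) :
    Nonempty (cycleGraph 5 ↪g H) := by
  have e01 : v0 ≠ v1 := a01.ne
  have e12 : v1 ≠ v2 := a12.ne
  have e23 : v2 ≠ v3 := a23.ne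
  have e34 : v3 ≠ v4 := a34.ne
  have e04 : v0 ≠ v4 := a40.ne'
  have e02 : v0 ≠ v2 := fun h => n03 (by rw [h]; exact a23)
  have e03 : v0 ≠ v3 := fun h => n02 (by rw [h]; exact a23.symm)
  have e13 : v1 ≠ v3 := fun h => n03 (by rw [← h]; exact a01)
  have e14 : v1 ≠ v4 := fun h => n24 (by rw [← h]; exact a12.symm)
  have e24 : v2 ≠ v4 := fun h => n14 (by rw [← h]; exact a12)
  refine ⟨⟨⟨![v0, v1, v2, v3, v4], ?_⟩, ?_⟩⟩
  · intro i j hij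
    fin_cases i <;> fin_cases j <;> simp_all
  · intro i j
    fin_cases i <;> fin_cases j <;>
      simp (config := { decide := true }) [cycleGraph_adj'] <;>
      first
        | exact a01 | exact a12 | exact a23 | exact a34 | exact a40
        | exact a01.symm | exact a12.symm | exact a23.symm | exact a34.symm | exact a40.symm
        | exact n02 | exact n03 | exact n13 | exact n14 | exact n24
        | exact fun h => n02 h.symm | exact fun h => n03 h.symm
        | exact fun h => n13 h.symm
        | exact fun h => n14 h.symm | exact fun h => n24 h.symm

lemma c4_embedding (v0 v1 v2 v3 : V)
    (a01 : H.Adj v0 v1) (a12 : H.Adj v1 v2) (a23 : H.Adj v2 v3) (a30 : H.Adj v3 v0)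
    (n02 : ¬ H.Adj v0 v2) (n13 : ¬ H.Adj v1 v3)
    (e02 : v0 ≠ v2) (e13 : v1 ≠ v3) :
    Nonempty (cycleGraph 4 ↪g H) := by
  have e01 : v0 ≠ v1 := a01.ne
  have e12 : v1 ≠ v2 := a12.ne
  have e23 : v2 ≠ v3 := a23.ne
  have e03 : v0 ≠ v3 := a30.ne'
  refine ⟨⟨⟨![v0, v1, v2, v3], ?_⟩, ?_⟩⟩
  · intro i j hij
    fin_cases i <;> fin_cases j <;> simp_all
  · intro i j
    fin_cases i <;> fin_cases j <;>
      simp (config := { decide := true }) [cycleGraph_adj'] <;>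
      first
        | exact a01 | exact a12 | exact a23 | exact a30
        | exact a01.symm | exact a12.symm | exact a23.symm | exact a30.symm
        | exact n02 | exact n13
        | exact fun h => n02 h.symm | exact fun h => n13 h.symm

end EmbCons

section Core
variable {V : Type} {H : SimpleGraph V}

/-- `u` and `v` both lie in `C` and are joined by a path inside `C`. -/
def ReachIn (H : SimpleGraph V) (C : Set V) (u v : V) : Prop :=
  ∃ (hu : u ∈ C) (hv : v ∈ C), (H.induce C).Reachable ⟨u, hu⟩ ⟨v, hv⟩

lemma ReachIn.refl {C : Set V} {u : V} (hu : u ∈ C) : ReachIn H C u u :=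
  ⟨hu, hu, Reachable.refl _⟩

lemma ReachIn.symm {C : Set V} {u v : V} (h : ReachIn H C u v) : ReachIn H C v u := by
  obtain ⟨hu, hv, hr⟩ := h; exact ⟨hv, hu, hr.symm⟩

lemma ReachIn.trans {C : Set V} {u v w : V} (h : ReachIn H C u v) (h' : ReachIn H C v w) :
    ReachIn H C u w := by
  obtain ⟨hu, hv, hr⟩ := h; obtain ⟨hv', hw, hr'⟩ := h'
  exact ⟨hu, hw, hr.trans (by convert hr' using 2)⟩

lemma reachIn_of_adj {C : Set V} {u v : V} (hu : u ∈ C) (hv : v ∈ C) (h : H.Adj u v) :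
    ReachIn H C u v :=
  ⟨hu, hv, Adj.reachable (by exact h)⟩

lemma ReachIn.mono {C D : Set V} (hCD : C ⊆ D) {u v : V} (h : ReachIn H C u v) :
    ReachIn H D u v := by
  obtain ⟨hu, hv, hr⟩ := h
  exact ⟨hCD hu, hCD hv, hr.map (H.induceHomOfLE hCD).toHom⟩

private lemma reach_delete_aux {C : Set V} {b : V} (hb : b ∈ C) :
    ∀ {x y : ↥C} (_ : (H.induce C).Walk x y)
      (_ : ¬ (H.induce C).Reachable x ⟨b, hb⟩),
      ReachIn H (C \ {b}) x.1 y.1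
  | x, _, Walk.nil, hnb => by
    have hx : x.1 ∈ C \ {b} := by
      refine ⟨x.2, fun h => ?_⟩
      simp only [Set.mem_singleton_iff] at h
      exact hnb (by rw [show x = ⟨b, hb⟩ from Subtype.ext h])
    exact ⟨hx, hx, Reachable.refl _⟩
  | x, y, Walk.cons hadj p, hnb => by
    have hmb : ¬ (H.induce C).Reachable _ ⟨b, hb⟩ :=
      fun h => hnb ((Adj.reachable hadj).trans h)
    obtain ⟨h1, h2, hr⟩ := reach_delete_aux hb p hmb
    have hx : x.1 ∈ C \ {b} := by
      refine ⟨x.2, fun h => ?_⟩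
      simp only [Set.mem_singleton_iff] at h
      exact hnb (by rw [show x = ⟨b, hb⟩ from Subtype.ext h])
    refine ⟨hx, h2, Reachable.trans (Adj.reachable ?_) hr⟩
    exact hadj

lemma ReachIn.delete {C : Set V} {b u v : V} (h : ReachIn H C u v) (hb : b ∈ C)
    (hnb : ¬ ReachIn H C u b) : ReachIn H (C \ {b}) u v := by
  obtain ⟨hu, hv, hr⟩ := h
  obtain ⟨w⟩ := hr
  exact reach_delete_aux hb w (fun h' => hnb ⟨hu, hb, h'⟩)

/-- The set of pairs of vertices of `C` joined through `C`. -/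
def pairsIn (H : SimpleGraph V) (C : Set V) : Set (V × V) :=
  {q | ReachIn H C q.1 q.2}

lemma swap_contra [Fintype V] {C : Set V} {a b x : V}
    (ha : a ∈ C) (hb : b ∈ C) (hx : x ∉ C)
    (hax : H.Adj a x) (hxb : H.Adj x b)
    (hnr : ¬ ReachIn H C a b)
    (hQ : ∀ w ∈ C, w ≠ a → ReachIn H C a w → ReachIn H (insert x (C \ {a})) x w)
    (hmax : (pairsIn H (insert x (C \ {a}))).ncard ≤ (pairsIn H C).ncard) : False := by
  classical
  set C' : Set V := insert x (C \ {a}) with hC'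
  have hxC' : x ∈ C' := Set.mem_insert _ _
  have hsub : ∀ w, w ∈ C → w ≠ a → w ∈ C' := fun w hw hwa =>
    Set.mem_insert_of_mem _ ⟨hw, hwa⟩
  have hab : a ≠ b := fun h => hnr (h ▸ ReachIn.refl ha)
  have hbC' : b ∈ C' := hsub b hb (fun h => hab h.symm)
  set ρ : V → V := fun w => if w = a then x else w with hρ
  have hres : ∀ q ∈ pairsIn H C, (ρ q.1, ρ q.2) ∈ pairsIn H C' := by
    rintro ⟨u, v⟩ ⟨hu, hv, hr⟩
    have key : ∀ (w : V) (hw : w ∈ C), ReachIn H C a w → ReachIn H C' x (ρ w) := by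
      intro w hw hraw
      by_cases hwa : w = a
      · simp only [hρ, hwa, if_pos rfl]; exact ReachIn.refl hxC'
      · simp only [hρ, if_neg hwa]; exact hQ w hw hwa hraw
    by_cases hra : ReachIn H C a u
    · have hrav : ReachIn H C a v := hra.trans ⟨hu, hv, hr⟩
      exact ((key u hu hra).symm.trans (key v hv hrav) : _)
    · have hua : u ≠ a := fun h => hra (by rw [h]; exact ReachIn.refl ha)
      have hruv : ReachIn H C u v := ⟨hu, hv, hr⟩
      have hva : v ≠ a := fun h => hra (by
        refine (hruv.trans ?_).symm
        rw [h]; exact ReachIn.refl ha)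
      have hnua : ¬ ReachIn H C u a := fun h => hra h.symm
      have : ReachIn H (C \ {a}) u v := hruv.delete ha hnua
      have : ReachIn H C' u v := this.mono (Set.subset_insert _ _)
      show ReachIn H C' (ρ u) (ρ v)
      simpa only [hρ, if_neg hua, if_neg hva] using this
  -- the image of `pairsIn H C` under `ρ × ρ` is a proper subset of `pairsIn H C'`
  have hinj : Set.InjOn (fun q : V × V => (ρ q.1, ρ q.2)) (pairsIn H C) := by
    have hρinj : ∀ u ∈ C, ∀ v ∈ C, ρ u = ρ v → u = v := by
      intro u hu v hv huv
      by_cases h1 : u = a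
      · by_cases h2 : v = a
        · rw [h1, h2]
        · exfalso
          simp only [hρ, if_pos h1, if_neg h2] at huv
          rw [← huv] at hv
          exact hx hv
      · by_cases h2 : v = a
        · exfalso
          simp only [hρ, if_neg h1, if_pos h2] at huv
          rw [huv] at hu
          exact hx hu
        · simpa only [hρ, if_neg h1, if_neg h2] using huv
    rintro ⟨u1, u2⟩ h1 ⟨v1, v2⟩ h2 heq
    obtain ⟨hu1, hu2, -⟩ := h1
    obtain ⟨hv1, hv2, -⟩ := h2
    simp only [Prod.mk.injEq] at heq
    exact Prod.ext (hρinj u1 hu1 v1 hv1 heq.1) (hρinj u2 hu2 v2 hv2 heq.2)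
  have hximg : ((fun q : V × V => (ρ q.1, ρ q.2)) '' pairsIn H C) ⊂ pairsIn H C' := by
    constructor
    · rintro q ⟨p, hp, rfl⟩; exact hres p hp
    · intro hcon
      have hxb' : (x, b) ∈ pairsIn H C' := reachIn_of_adj hxC' hbC' hxb
      obtain ⟨⟨u, v⟩, huv, heq⟩ := hcon hxb'
      simp only [Prod.mk.injEq] at heq
      obtain ⟨hu, hv, -⟩ := id huv
      have hua : u = a := by
        by_contra h
        have heq1 : u = x := by
          have : ρ u = u := if_neg h
          rw [this] at heq; exact heq.1
        rw [heq1] at hu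
        exact hx hu
      have hvb : v = b := by
        by_cases h : v = a
        · exfalso
          have heq2 : x = b := by
            have : ρ v = x := by rw [h]; simp [hρ]
            rw [this] at heq; exact heq.2
          rw [← heq2] at hb
          exact hx hb
        · have : ρ v = v := if_neg h
          rw [this] at heq; exact heq.2
      subst hua; subst hvb
      exact hnr huv
  have hfin : (pairsIn H C').Finite := Set.toFinite _
  have h1 : (pairsIn H C).ncard = ((fun q : V × V => (ρ q.1, ρ q.2)) '' pairsIn H C).ncard :=
    (Set.ncard_image_of_injOn hinj).symm
  have h2 := Set.ncard_lt_ncard hximg hfin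
  omega


lemma find_bridge {C : Set V} (hcov : _root_.IsVertexCover H C) :
    ∀ (n : ℕ) {s t : V} (hs : s ∈ C) (ht : t ∈ C) (w : H.Walk s t), w.length ≤ n →
      ¬ ReachIn H C s t →
      ∃ a b x : V, a ∈ C ∧ b ∈ C ∧ x ∉ C ∧ H.Adj a x ∧ H.Adj x b ∧
        ¬ ReachIn H C a b := by
  intro n
  induction n with
  | zero =>
    intro s t hs ht w hlen hnr
    cases w with
    | nil => exact absurd (ReachIn.refl hs) hnr
    | cons h p => simp at hlen
  | succ n ih =>
    intro s t hs ht w hlen hnr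
    cases w with
    | nil => exact absurd (ReachIn.refl hs) hnr
    | @cons _ m _ h p =>
      by_cases hm : m ∈ C
      · have hsm : ReachIn H C s m := reachIn_of_adj hs hm h
        have hmt : ¬ ReachIn H C m t := fun h' => hnr (hsm.trans h')
        exact ih hm ht p (by simpa using Nat.le_of_succ_le_succ (by simpa using hlen)) hmt
      · cases p with
        | nil => exact absurd ht hm
        | @cons _ m2 _ h2 q =>
          have hm2 : m2 ∈ C := (hcov h2).resolve_left hm
          by_cases hr : ReachIn H C s m2
          · have hm2t : ¬ ReachIn H C m2 t := fun h' => hnr (hr.trans h')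
            have hlen' : q.length ≤ n := by
              simp only [Walk.length_cons] at hlen; omega
            exact ih hm2 ht q hlen' hm2t
          · exact ⟨s, m2, m, hs, hm2, hm, h, h2, hr⟩

lemma find_attach {C : Set V} {a x : V} :
    ∀ {s t : ↥C} (_ : (H.induce C).Walk s t), t.1 = a → s.1 ≠ a →
      ¬ ReachIn H (insert x (C \ {a})) x s.1 →
      ∃ d, d ∈ C ∧ d ≠ a ∧ H.Adj a d ∧ ¬ ReachIn H (insert x (C \ {a})) x d
  | _, _, Walk.nil, hta, hsa, _ => absurd hta hsa
  | s, t, Walk.cons (v := m) hadj p, hta, hsa, hns => by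
    by_cases hma : m.1 = a
    · refine ⟨s.1, s.2, hsa, ?_, hns⟩
      have : H.Adj s.1 m.1 := hadj
      rw [hma] at this
      exact this.symm
    · have hsC' : s.1 ∈ insert x (C \ {a}) := Set.mem_insert_of_mem _ ⟨s.2, hsa⟩
      have hmC' : m.1 ∈ insert x (C \ {a}) := Set.mem_insert_of_mem _ ⟨m.2, hma⟩
      have hstep : ReachIn H (insert x (C \ {a})) m.1 s.1 :=
        reachIn_of_adj hmC' hsC' (Adj.symm (hadj : H.Adj s.1 m.1))
      have hnm : ¬ ReachIn H (insert x (C \ {a})) x m.1 :=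
        fun h' => hns (h'.trans hstep)
      exact find_attach p hta hma hnm

end Core

section TauBasics
variable {V : Type} {G : SimpleGraph V}

lemma isVertexCover_univ : _root_.IsVertexCover G Set.univ := fun _ _ _ => Or.inl trivial

lemma tau_spec (G : SimpleGraph V) :
    ∃ C : Set V, _root_.IsVertexCover G C ∧ C.ncard = tau G :=
  Nat.sInf_mem (⟨(Set.univ : Set V).ncard, Set.univ, _root_.isVertexCover_univ, rfl⟩ :
    {n | ∃ C : Set V, _root_.IsVertexCover G C ∧ C.ncard = n}.Nonempty)

lemma tau_le_of_cover {C : Set V} (h : _root_.IsVertexCover G C) : tau G ≤ C.ncard :=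
  Nat.sInf_le ⟨C, h, rfl⟩

lemma tauc_le_of_ccover {C : Set V} (h : IsConnectedVertexCover G C) : tauc G ≤ C.ncard :=
  Nat.sInf_le ⟨C, h, rfl⟩

lemma tauc_spec (hne : ∃ C : Set V, IsConnectedVertexCover G C) :
    ∃ C : Set V, IsConnectedVertexCover G C ∧ C.ncard = tauc G := by
  obtain ⟨C, hC⟩ := hne
  exact Nat.sInf_mem (⟨C.ncard, C, hC, rfl⟩ :
    {n | ∃ C : Set V, IsConnectedVertexCover G C ∧ C.ncard = n}.Nonempty)

lemma tau_le_tauc (hne : ∃ C : Set V, IsConnectedVertexCover G C) : tau G ≤ tauc G := by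
  obtain ⟨C, hC, hcard⟩ := tauc_spec hne
  exact hcard ▸ tau_le_of_cover hC.1

end TauBasics

section Main
variable {V : Type} [Fintype V] {H : SimpleGraph V}

lemma core_case {C : Set V} {a b x : V}
    (hcov : _root_.IsVertexCover H C) (hsize : C.ncard = tau H)
    (hmax : ∀ D : Set V, _root_.IsVertexCover H D → D.ncard = tau H →
      (pairsIn H D).ncard ≤ (pairsIn H C).ncard)
    (h5 : HFree (SimpleGraph.pathGraph 5) H) (hc5 : HFree (SimpleGraph.cycleGraph 5) H)
    (hc4 : HFree (SimpleGraph.cycleGraph 4) H)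
    (ha : a ∈ C) (hb : b ∈ C) (hx : x ∉ C)
    (hax : H.Adj a x) (hxb : H.Adj x b) (hnr : ¬ ReachIn H C a b)
    (hA : ∀ y, y ∉ C → H.Adj a y → H.Adj b y) : False := by
  classical
  have indep : ∀ u v, u ∉ C → v ∉ C → ¬ H.Adj u v := fun u v hu hv h => (hcov h).elim hu hv
  have hnab : ¬ H.Adj a b := fun h => hnr (reachIn_of_adj ha hb h)
  have hab : a ≠ b := fun h => hnr (by rw [h]; exact ReachIn.refl hb)
  have hcommon : ∀ y, y ∉ C → H.Adj a y → H.Adj b y → y = x := by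
    intro y hy hay hby
    by_contra hne
    exact hc4.false (Classical.choice
      (c4_embedding a x b y hax hxb hby hay.symm hnab (indep x y hx hy) hab
        (fun h => hne h.symm)))
  have hNa : ∀ y, y ∉ C → H.Adj a y → y = x := fun y hy hay => hcommon y hy hay (hA y hy hay)
  set C' : Set V := insert x (C \ {a}) with hC'def
  have hxC' : x ∈ C' := Set.mem_insert _ _
  have hcov' : _root_.IsVertexCover H C' := by
    intro u v huv
    rcases hcov huv with hu | hv
    · by_cases huc : u = a
      · subst huc
        by_cases hvC : v ∈ C
        · exact Or.inr (Set.mem_insert_of_mem _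
            ⟨hvC, fun h => H.irrefl (by rwa [show v = u from h] at huv)⟩)
        · exact Or.inr (by rw [hNa v hvC huv]; exact Set.mem_insert _ _)
      · exact Or.inl (Set.mem_insert_of_mem _ ⟨hu, huc⟩)
    · by_cases hvc : v = a
      · subst hvc
        by_cases huC : u ∈ C
        · exact Or.inl (Set.mem_insert_of_mem _
            ⟨huC, fun h => H.irrefl (by rwa [show u = v from h] at huv)⟩)
        · exact Or.inl (by rw [hNa u huC huv.symm]; exact Set.mem_insert _ _)
      · exact Or.inr (Set.mem_insert_of_mem _ ⟨hv, hvc⟩)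
  have hsize' : C'.ncard = tau H := by
    have hxnot : x ∉ C \ {a} := fun h => hx h.1
    rw [hC'def, Set.ncard_insert_of_notMem hxnot (Set.toFinite _),
      Set.ncard_diff_singleton_of_mem ha]
    have hpos : 0 < C.ncard := (Set.ncard_pos (Set.toFinite _)).mpr ⟨a, ha⟩
    omega
  have hmax' := hmax C' hcov' hsize'
  by_cases hQ : ∀ w ∈ C, w ≠ a → ReachIn H C a w → ReachIn H C' x w
  · exact swap_contra ha hb hx hax hxb hnr hQ hmax'
  push_neg at hQ
  obtain ⟨w0, hw0C, hw0a, hw0r, hw0n⟩ := hQ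
  obtain ⟨ha', hw0', hr⟩ := hw0r
  obtain ⟨wlk⟩ := hr.symm
  obtain ⟨d, hdC, hda, had, hdn⟩ := find_attach wlk rfl hw0a hw0n
  have hdC' : d ∈ C' := Set.mem_insert_of_mem _ ⟨hdC, hda⟩
  have hnxd : ¬ H.Adj x d := fun h => hdn (reachIn_of_adj hxC' hdC' h)
  have hbne : b ≠ a := fun h => hab h.symm
  have hbC' : b ∈ C' := Set.mem_insert_of_mem _ ⟨hb, hbne⟩
  have hxbC' : ReachIn H C' x b := reachIn_of_adj hxC' hbC' hxb
  have hndb : ¬ H.Adj d b := fun h => hdn (hxbC'.trans (reachIn_of_adj hbC' hdC' h.symm))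
  by_cases hB : ∀ y, y ∉ C → H.Adj b y → H.Adj a y
  · -- all neighbours of b outside C are common, hence equal x; swap on b
    have hNb : ∀ y, y ∉ C → H.Adj b y → y = x := fun y hy hby => hcommon y hy (hB y hy hby) hby
    set C'' : Set V := insert x (C \ {b}) with hC''def
    have hxC'' : x ∈ C'' := Set.mem_insert _ _
    have hcov'' : _root_.IsVertexCover H C'' := by
      intro u v huv
      rcases hcov huv with hu | hv
      · by_cases huc : u = b
        · subst huc
          by_cases hvC : v ∈ C
          · exact Or.inr (Set.mem_insert_of_mem _
              ⟨hvC, fun h => H.irrefl (by rwa [show v = u from h] at huv)⟩)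
          · exact Or.inr (by rw [hNb v hvC huv]; exact Set.mem_insert _ _)
        · exact Or.inl (Set.mem_insert_of_mem _ ⟨hu, huc⟩)
      · by_cases hvc : v = b
        · subst hvc
          by_cases huC : u ∈ C
          · exact Or.inl (Set.mem_insert_of_mem _
              ⟨huC, fun h => H.irrefl (by rwa [show u = v from h] at huv)⟩)
          · exact Or.inl (by rw [hNb u huC huv.symm]; exact Set.mem_insert _ _)
        · exact Or.inr (Set.mem_insert_of_mem _ ⟨hv, hvc⟩)
    have hsize'' : C''.ncard = tau H := by
      have hxnot : x ∉ C \ {b} := fun h => hx h.1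
      rw [hC''def, Set.ncard_insert_of_notMem hxnot (Set.toFinite _),
        Set.ncard_diff_singleton_of_mem hb]
      have hpos : 0 < C.ncard := (Set.ncard_pos (Set.toFinite _)).mpr ⟨b, hb⟩
      omega
    by_cases hQ'' : ∀ w ∈ C, w ≠ b → ReachIn H C b w → ReachIn H C'' x w
    · exact swap_contra hb ha hx hxb.symm hax.symm (fun h => hnr h.symm) hQ''
        (hmax C'' hcov'' hsize'')
    push_neg at hQ''
    obtain ⟨w1, hw1C, hw1b, hw1r, hw1n⟩ := hQ''
    obtain ⟨hb1, hw1', hr1⟩ := hw1r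
    obtain ⟨wlk1⟩ := hr1.symm
    obtain ⟨e, heC, heb, hbe, hen⟩ := find_attach wlk1 rfl hw1b hw1n
    have heC'' : e ∈ C'' := Set.mem_insert_of_mem _ ⟨heC, heb⟩
    have hnxe : ¬ H.Adj x e := fun h => hen (reachIn_of_adj hxC'' heC'' h)
    have haC'' : a ∈ C'' := Set.mem_insert_of_mem _ ⟨ha, hab⟩
    have hnea : ¬ H.Adj e a := fun h =>
      hen ((reachIn_of_adj hxC'' haC'' hax.symm).trans (reachIn_of_adj haC'' heC'' h.symm))
    have hnde : ¬ H.Adj d e := fun h => hnr ((reachIn_of_adj ha hdC had).trans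
      ((reachIn_of_adj hdC heC h).trans (reachIn_of_adj heC hb hbe.symm)))
    exact h5.false (Classical.choice (p5_embedding d a x b e had.symm hax hxb hbe
      (fun h => hnxd h.symm) hndb hnde hnab (fun h => hnea h.symm) hnxe))
  · push_neg at hB
    obtain ⟨b', hb'C, hbb', hnab'⟩ := hB
    by_cases hdb' : H.Adj d b'
    · exact hc5.false (Classical.choice (c5_embedding d a x b b' had.symm hax hxb hbb' hdb'.symm
        (fun h => hnxd h.symm) hndb hnab hnab' (indep x b' hx hb'C)))
    · exact h5.false (Classical.choice (p5_embedding d a x b b' had.symm hax hxb hbb'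
        (fun h => hnxd h.symm) hndb hdb' hnab hnab' (indep x b' hx hb'C)))

lemma main_structural (hconn : H.Connected) (hedge : H.edgeSet.Nonempty)
    (h5 : HFree (SimpleGraph.pathGraph 5) H) (hc5 : HFree (SimpleGraph.cycleGraph 5) H)
    (hc4 : HFree (SimpleGraph.cycleGraph 4) H) : tauc H = tau H := by
  classical
  obtain ⟨u0, v0, huv0⟩ : ∃ u v, H.Adj u v := by
    obtain ⟨e, he⟩ := hedge
    induction e using Sym2.ind with
    | _ x y => exact ⟨x, y, he⟩
  set P : Set ℕ :=
    {m | ∃ D : Set V, _root_.IsVertexCover H D ∧ D.ncard = tau H ∧ (pairsIn H D).ncard = m} with hPdef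
  have hPne : P.Nonempty := by
    obtain ⟨C0, h1, h2⟩ := tau_spec H
    exact ⟨_, C0, h1, h2, rfl⟩
  have hPbdd : BddAbove P := by
    refine ⟨(Set.univ : Set (V × V)).ncard, ?_⟩
    rintro m ⟨D, -, -, rfl⟩
    exact Set.ncard_le_ncard (Set.subset_univ _) (Set.toFinite _)
  obtain ⟨C, hcov, hsize, hpc⟩ := Nat.sSup_mem hPne hPbdd
  have hmax : ∀ D : Set V, _root_.IsVertexCover H D → D.ncard = tau H →
      (pairsIn H D).ncard ≤ (pairsIn H C).ncard := by
    intro D h1 h2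
    rw [hpc]
    exact le_csSup hPbdd ⟨D, h1, h2, rfl⟩
  have hCne : C.Nonempty := (hcov huv0).elim (fun h => ⟨u0, h⟩) (fun h => ⟨v0, h⟩)
  have hCconn : (H.induce C).Connected := by
    rw [connected_iff]
    refine ⟨?_, ⟨⟨hCne.choose, hCne.choose_spec⟩⟩⟩
    rintro ⟨s, hs⟩ ⟨t, ht⟩
    by_contra hnr0
    have hnr : ¬ ReachIn H C s t := by
      rintro ⟨hs', ht', hr⟩
      exact hnr0 (by convert hr using 2)
    obtain ⟨wlk⟩ := hconn.preconnected s t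
    obtain ⟨a, b, x, ha, hb, hxn, hax, hxb, hnab⟩ :=
      find_bridge hcov wlk.length hs ht wlk le_rfl hnr
    by_cases hA : ∀ y, y ∉ C → H.Adj a y → H.Adj b y
    · exact core_case hcov hsize hmax h5 hc5 hc4 ha hb hxn hax hxb hnab hA
    by_cases hB : ∀ y, y ∉ C → H.Adj b y → H.Adj a y
    · exact core_case hcov hsize hmax h5 hc5 hc4 hb ha hxn hxb.symm hax.symm
        (fun h => hnab h.symm) hB
    · push_neg at hA hB
      obtain ⟨a', ha'C, haa', hnba'⟩ := hA
      obtain ⟨b', hb'C, hbb', hnab'⟩ := hB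
      have indep : ∀ u v, u ∉ C → v ∉ C → ¬ H.Adj u v := fun u v hu hv h => (hcov h).elim hu hv
      have hnab2 : ¬ H.Adj a b := fun h => hnab (reachIn_of_adj ha hb h)
      exact h5.false (Classical.choice (p5_embedding a' a x b b' haa'.symm hax hxb hbb'
        (indep a' x ha'C hxn) (fun h => hnba' h.symm) (indep a' b' ha'C hb'C) hnab2 hnab'
        (indep x b' hxn hb'C)))
  have hccov : IsConnectedVertexCover H C := ⟨hcov, hCconn⟩
  have h1 : tauc H ≤ tau H := hsize ▸ tauc_le_of_ccover hccov
  have h2 : tau H ≤ tauc H := tau_le_tauc ⟨C, hccov⟩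
  omega

end Main

section IsoInv
variable {V W : Type} {G1 : SimpleGraph V} {G2 : SimpleGraph W}

def isoInduce (e : G1 ≃g G2) (C : Set V) : G1.induce C ≃g G2.induce (e.toEquiv '' C) where
  toEquiv := e.toEquiv.image C
  map_rel_iff' := by
    rintro ⟨u, hu⟩ ⟨v, hv⟩
    simp only [Equiv.image, Equiv.coe_fn_mk, comap_adj, Function.Embedding.coe_subtype]
    exact e.map_adj_iff

lemma isVertexCover_image (e : G1 ≃g G2) {C : Set V} (h : _root_.IsVertexCover G1 C) :
    _root_.IsVertexCover G2 (e.toEquiv '' C) := by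
  intro u v huv
  have hadj : G1.Adj (e.symm u) (e.symm v) := by
    rw [← e.map_adj_iff]
    simpa using huv
  rcases h hadj with h1 | h1
  · exact Or.inl ⟨_, h1, by simp⟩
  · exact Or.inr ⟨_, h1, by simp⟩

lemma isConnectedVertexCover_image (e : G1 ≃g G2) {C : Set V}
    (h : IsConnectedVertexCover G1 C) : IsConnectedVertexCover G2 (e.toEquiv '' C) := by
  refine ⟨isVertexCover_image e h.1, ?_⟩
  exact h.2.map (isoInduce e C).toHom (isoInduce e C).toEquiv.surjective

lemma tau_iso (e : G1 ≃g G2) : tau G1 = tau G2 := by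
  unfold tau
  congr 1
  ext n
  constructor
  · rintro ⟨C, h1, rfl⟩
    exact ⟨e.toEquiv '' C, isVertexCover_image e h1,
      Set.ncard_image_of_injective _ e.toEquiv.injective⟩
  · rintro ⟨C, h1, rfl⟩
    exact ⟨e.symm.toEquiv '' C, isVertexCover_image e.symm h1,
      Set.ncard_image_of_injective _ e.symm.toEquiv.injective⟩

lemma tauc_iso (e : G1 ≃g G2) : tauc G1 = tauc G2 := by
  unfold tauc
  congr 1
  ext n
  constructor
  · rintro ⟨C, h1, rfl⟩
    exact ⟨e.toEquiv '' C, isConnectedVertexCover_image e h1,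
      Set.ncard_image_of_injective _ e.toEquiv.injective⟩
  · rintro ⟨C, h1, rfl⟩
    exact ⟨e.symm.toEquiv '' C, isConnectedVertexCover_image e.symm h1,
      Set.ncard_image_of_injective _ e.symm.toEquiv.injective⟩

noncomputable def embRangeIso {K : SimpleGraph W} {G : SimpleGraph V} (f : K ↪g G) :
    K ≃g G.induce (Set.range ⇑f) where
  toEquiv := Equiv.ofInjective ⇑f f.injective
  map_rel_iff' := by
    intro a b
    exact f.map_adj_iff

end IsoInv

section Concrete
open SimpleGraph

lemma induce_univ_connected {V : Type} {G : SimpleGraph V} (h : G.Connected) :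
    (G.induce Set.univ).Connected :=
  h.map G.induceUnivIso.symm.toHom G.induceUnivIso.symm.toEquiv.surjective

-- ### path graph P₅

lemma tau_path5_le : tau (pathGraph 5) ≤ 2 := by
  have hcov : _root_.IsVertexCover (pathGraph 5) {1, 3} := by
    intro u v huv
    rw [pathGraph_adj] at huv
    fin_cases u <;> fin_cases v <;>
      simp_all (config := { decide := true }) [Set.mem_insert_iff, Set.mem_singleton_iff]
  have h := tau_le_of_cover hcov
  rwa [Set.ncard_pair (by decide : (1 : Fin 5) ≠ 3)] at h

lemma tauc_path5_ge : 3 ≤ tauc (pathGraph 5) := by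
  have hex : ∃ C, IsConnectedVertexCover (pathGraph 5) C :=
    ⟨Set.univ, _root_.isVertexCover_univ, induce_univ_connected (pathGraph_connected 4)⟩
  obtain ⟨C, ⟨hcov, hconn⟩, hcard⟩ := tauc_spec hex
  rw [← hcard]
  by_contra hlt
  push_neg at hlt
  have hle2 : C.ncard ≤ 2 := by omega
  have adj01 : (pathGraph 5).Adj 0 1 := by rw [pathGraph_adj]; decide
  have adj12 : (pathGraph 5).Adj 1 2 := by rw [pathGraph_adj]; decide
  have adj23 : (pathGraph 5).Adj 2 3 := by rw [pathGraph_adj]; decide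
  have adj34 : (pathGraph 5).Adj 3 4 := by rw [pathGraph_adj]; decide
  have hcard3 : ∀ s : Set (Fin 5), s ⊆ C → s.ncard = 3 → False := by
    intro s hs h3
    have := Set.ncard_le_ncard hs (Set.toFinite C)
    omega
  have h1 : (1 : Fin 5) ∈ C := by
    by_contra h1n
    have h0 : (0 : Fin 5) ∈ C := (hcov adj01).resolve_right h1n
    have h2 : (2 : Fin 5) ∈ C := (hcov adj12).resolve_left h1n
    rcases hcov adj34 with h3 | h4
    · refine hcard3 {0, 2, 3} ?_ ?_
      · intro z hz
        simp only [Set.mem_insert_iff, Set.mem_singleton_iff] at hz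
        rcases hz with rfl | rfl | rfl <;> assumption
      · rw [Set.ncard_insert_of_notMem (by decide) (Set.toFinite _),
          Set.ncard_insert_of_notMem (by decide) (Set.toFinite _), Set.ncard_singleton]
    · refine hcard3 {0, 2, 4} ?_ ?_
      · intro z hz
        simp only [Set.mem_insert_iff, Set.mem_singleton_iff] at hz
        rcases hz with rfl | rfl | rfl <;> assumption
      · rw [Set.ncard_insert_of_notMem (by decide) (Set.toFinite _),
          Set.ncard_insert_of_notMem (by decide) (Set.toFinite _), Set.ncard_singleton]
  have h3 : (3 : Fin 5) ∈ C := by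
    by_contra h3n
    have h4 : (4 : Fin 5) ∈ C := (hcov adj34).resolve_left h3n
    have h2 : (2 : Fin 5) ∈ C := (hcov adj23).resolve_right h3n
    rcases hcov adj01 with h0 | h1'
    · refine hcard3 {0, 2, 4} ?_ ?_
      · intro z hz
        simp only [Set.mem_insert_iff, Set.mem_singleton_iff] at hz
        rcases hz with rfl | rfl | rfl <;> assumption
      · rw [Set.ncard_insert_of_notMem (by decide) (Set.toFinite _),
          Set.ncard_insert_of_notMem (by decide) (Set.toFinite _), Set.ncard_singleton]
    · refine hcard3 {1, 2, 4} ?_ ?_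
      · intro z hz
        simp only [Set.mem_insert_iff, Set.mem_singleton_iff] at hz
        rcases hz with rfl | rfl | rfl <;> assumption
      · rw [Set.ncard_insert_of_notMem (by decide) (Set.toFinite _),
          Set.ncard_insert_of_notMem (by decide) (Set.toFinite _), Set.ncard_singleton]
  have heq : ({1, 3} : Set (Fin 5)) = C := by
    refine Set.eq_of_subset_of_ncard_le ?_ ?_ (Set.toFinite C)
    · intro z hz
      simp only [Set.mem_insert_iff, Set.mem_singleton_iff] at hz
      rcases hz with rfl | rfl <;> assumption
    · rw [Set.ncard_pair (by decide : (1 : Fin 5) ≠ 3)]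
      exact hle2
  have hiso : ∀ w : ↥C, ¬ ((pathGraph 5).induce C).Adj ⟨1, h1⟩ w := by
    rintro ⟨w, hw⟩ hadj
    rw [← heq] at hw
    have hadj' : (pathGraph 5).Adj 1 w := hadj
    simp only [Set.mem_insert_iff, Set.mem_singleton_iff] at hw
    rcases hw with rfl | rfl
    · exact (pathGraph 5).irrefl hadj'
    · rw [pathGraph_adj] at hadj'
      revert hadj'
      decide
  have hreach := hconn.preconnected ⟨1, h1⟩ ⟨3, h3⟩
  have := eq_of_reachable_of_isolated hiso hreach
  have : (1 : Fin 5) = 3 := congrArg Subtype.val this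
  exact absurd this (by decide)

lemma tauc_ne_tau_path5 : tauc (pathGraph 5) ≠ tau (pathGraph 5) := by
  have h1 := tau_path5_le
  have h2 := tauc_path5_ge
  omega

end Concrete

section Concrete2
open SimpleGraph

lemma cyc5_adj_consec (u : Fin 5) : (cycleGraph 5).Adj u (u + 1) := by
  rw [cycleGraph_adj']
  right
  rw [add_sub_cancel_left]
  decide

lemma cyc5_aux {C : Set (Fin 5)} (hcov : _root_.IsVertexCover (cycleGraph 5) C)
    (hconn : ((cycleGraph 5).induce C).Connected)
    (u : Fin 5) (hu : u ∉ C) (hu2 : u + 2 ∉ C) : False := by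
  have m1 : u + 1 ∈ C := (hcov (cyc5_adj_consec u)).resolve_left hu
  have m3 : u + 3 ∈ C := by
    have h := (hcov (cyc5_adj_consec (u + 2))).resolve_left hu2
    rwa [show u + 2 + 1 = u + 3 by open Fin.CommRing in ring] at h
  have hne : u + 1 ≠ u + 3 := fun h => absurd (add_left_cancel h) (by decide)
  have hiso : ∀ w : ↥C, ¬ ((cycleGraph 5).induce C).Adj ⟨u + 1, m1⟩ w := by
    rintro ⟨w, hw⟩ hadj
    have hadj' : (cycleGraph 5).Adj (u + 1) w := hadj
    rw [cycleGraph_adj'] at hadj'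
    rcases hadj' with h | h
    · -- (u + 1) - w = 1, so w = u
      have h1 : (u + 1) - w = 1 := Fin.ext h
      have : w = u := by
        have := sub_eq_iff_eq_add.mp h1
        -- u + 1 = 1 + w
        have : u + 1 = w + 1 := by rw [this]; open Fin.CommRing in ring
        exact (add_right_cancel this).symm
      exact hu (this ▸ hw)
    · -- w - (u + 1) = 1, so w = u + 2
      have h1 : w - (u + 1) = 1 := Fin.ext h
      have : w = u + 2 := by
        have := sub_eq_iff_eq_add.mp h1
        rw [this]; open Fin.CommRing in ring
      exact hu2 (this ▸ hw)
  have hreach := hconn.preconnected ⟨u + 1, m1⟩ ⟨u + 3, m3⟩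
  exact hne (congrArg Subtype.val (eq_of_reachable_of_isolated hiso hreach))

lemma tau_cycle5_le : tau (cycleGraph 5) ≤ 3 := by
  have hcov : _root_.IsVertexCover (cycleGraph 5) {0, 1, 3} := by
    intro u v huv
    rw [cycleGraph_adj'] at huv
    fin_cases u <;> fin_cases v <;>
      simp_all (config := { decide := true }) [Set.mem_insert_iff, Set.mem_singleton_iff]
  have h := tau_le_of_cover hcov
  have h3 : ({0, 1, 3} : Set (Fin 5)).ncard = 3 := by
    rw [Set.ncard_insert_of_notMem (by decide) (Set.toFinite _),
      Set.ncard_insert_of_notMem (by decide) (Set.toFinite _), Set.ncard_singleton]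
  omega

lemma tauc_cycle5_ge : 4 ≤ tauc (cycleGraph 5) := by
  have hex : ∃ C, IsConnectedVertexCover (cycleGraph 5) C :=
    ⟨Set.univ, _root_.isVertexCover_univ, induce_univ_connected cycleGraph_connected⟩
  obtain ⟨C, ⟨hcov, hconn⟩, hcard⟩ := tauc_spec hex
  rw [← hcard]
  by_contra hlt
  push_neg at hlt
  have hcompl : 2 ≤ Cᶜ.ncard := by
    have h := Set.ncard_add_ncard_compl C (Set.toFinite _) (Set.toFinite _)
    have h5 : Nat.card (Fin 5) = 5 := by simp
    omega
  obtain ⟨u, hu, v, hv, hne⟩ := (Set.one_lt_ncard (Set.toFinite _)).mp hcompl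
  have hu' : u ∉ C := hu
  have hv' : v ∉ C := hv
  have hnadj : ¬ (cycleGraph 5).Adj u v := fun h => (hcov h).elim hu' hv'
  have hdisj : v = u + 2 ∨ u = v + 2 := by
    fin_cases u <;> fin_cases v <;>
      first
        | (exact absurd rfl hne)
        | (exact absurd (by rw [cycleGraph_adj']; decide) hnadj)
        | decide
  rcases hdisj with h | h
  · exact cyc5_aux hcov hconn u hu' (h ▸ hv')
  · exact cyc5_aux hcov hconn v hv' (h ▸ hu')

lemma tauc_ne_tau_cycle5 : tauc (cycleGraph 5) ≠ tau (cycleGraph 5) := by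
  have h1 := tau_cycle5_le
  have h2 := tauc_cycle5_ge
  omega

lemma cyc4_adj_consec (u : Fin 4) : (cycleGraph 4).Adj u (u + 1) := by
  rw [cycleGraph_adj']
  right
  rw [add_sub_cancel_left]
  decide

lemma cyc4_aux {C : Set (Fin 4)} (hcov : _root_.IsVertexCover (cycleGraph 4) C)
    (hconn : ((cycleGraph 4).induce C).Connected)
    (u : Fin 4) (hu : u ∉ C) (hu2 : u + 2 ∉ C) : False := by
  have m1 : u + 1 ∈ C := (hcov (cyc4_adj_consec u)).resolve_left hu
  have m3 : u + 3 ∈ C := by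
    have h := (hcov (cyc4_adj_consec (u + 2))).resolve_left hu2
    rwa [show u + 2 + 1 = u + 3 by open Fin.CommRing in ring] at h
  have hne : u + 1 ≠ u + 3 := fun h => absurd (add_left_cancel h) (by decide)
  have hiso : ∀ w : ↥C, ¬ ((cycleGraph 4).induce C).Adj ⟨u + 1, m1⟩ w := by
    rintro ⟨w, hw⟩ hadj
    have hadj' : (cycleGraph 4).Adj (u + 1) w := hadj
    rw [cycleGraph_adj'] at hadj'
    rcases hadj' with h | h
    · have h1 : (u + 1) - w = 1 := Fin.ext h
      have : w = u := by
        have := sub_eq_iff_eq_add.mp h1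
        have : u + 1 = w + 1 := by rw [this]; open Fin.CommRing in ring
        exact (add_right_cancel this).symm
      exact hu (this ▸ hw)
    · have h1 : w - (u + 1) = 1 := Fin.ext h
      have : w = u + 2 := by
        have := sub_eq_iff_eq_add.mp h1
        rw [this]; open Fin.CommRing in ring
      exact hu2 (this ▸ hw)
  have hreach := hconn.preconnected ⟨u + 1, m1⟩ ⟨u + 3, m3⟩
  exact hne (congrArg Subtype.val (eq_of_reachable_of_isolated hiso hreach))

lemma tau_cycle4_le : tau (cycleGraph 4) ≤ 2 := by
  have hcov : _root_.IsVertexCover (cycleGraph 4) {0, 2} := by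
    intro u v huv
    rw [cycleGraph_adj'] at huv
    fin_cases u <;> fin_cases v <;>
      simp_all (config := { decide := true }) [Set.mem_insert_iff, Set.mem_singleton_iff]
  have h := tau_le_of_cover hcov
  rwa [Set.ncard_pair (by decide : (0 : Fin 4) ≠ 2)] at h

lemma tauc_cycle4_ge : 3 ≤ tauc (cycleGraph 4) := by
  have hex : ∃ C, IsConnectedVertexCover (cycleGraph 4) C :=
    ⟨Set.univ, _root_.isVertexCover_univ, induce_univ_connected cycleGraph_connected⟩
  obtain ⟨C, ⟨hcov, hconn⟩, hcard⟩ := tauc_spec hex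
  rw [← hcard]
  by_contra hlt
  push_neg at hlt
  have hcompl : 2 ≤ Cᶜ.ncard := by
    have h := Set.ncard_add_ncard_compl C (Set.toFinite _) (Set.toFinite _)
    have h4 : Nat.card (Fin 4) = 4 := by simp
    omega
  obtain ⟨u, hu, v, hv, hne⟩ := (Set.one_lt_ncard (Set.toFinite _)).mp hcompl
  have hu' : u ∉ C := hu
  have hv' : v ∉ C := hv
  have hnadj : ¬ (cycleGraph 4).Adj u v := fun h => (hcov h).elim hu' hv'
  have hdisj : v = u + 2 := by
    fin_cases u <;> fin_cases v <;>
      first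
        | (exact absurd rfl hne)
        | (exact absurd (by rw [cycleGraph_adj']; decide) hnadj)
        | decide
  exact cyc4_aux hcov hconn u hu' (hdisj ▸ hv')

lemma tauc_ne_tau_cycle4 : tauc (cycleGraph 4) ≠ tau (cycleGraph 4) := by
  have h1 := tau_cycle4_le
  have h2 := tauc_cycle4_ge
  omega

end Concrete2

section Final
open SimpleGraph

private lemma modh (k a b : ℕ) (ha : a < 5) (hb : b < 5) :
    ((k + 6 - b + a) % (k + 6) = 1) ↔ (b + 1 = a) := by
  rcases le_or_gt b a with h | h
  · rw [show k + 6 - b + a = (a - b) + (k + 6) by omega, Nat.add_mod_right,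
      Nat.mod_eq_of_lt (by omega)]
    omega
  · rw [Nat.mod_eq_of_lt (by omega)]
    omega

noncomputable def p5CycleEmbedding (k : ℕ) : pathGraph 5 ↪g cycleGraph (k + 6) where
  toEmbedding := ⟨Fin.castLE (by omega), Fin.castLE_injective _⟩
  map_rel_iff' := by
    intro i j
    simp only [Function.Embedding.coeFn_mk]
    rw [cycleGraph_adj', pathGraph_adj]
    have hval : ∀ i j : Fin 5,
        ((Fin.castLE (show 5 ≤ k + 6 by omega) i - Fin.castLE (by omega) j : Fin (k + 6))).val
          = (k + 6 - j.val + i.val) % (k + 6) := by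
      intro i j
      rw [Fin.sub_def]
      simp [Fin.coe_castLE]
    rw [hval, hval, modh k i.val j.val i.isLt j.isLt, modh k j.val i.val j.isLt i.isLt]
    constructor
    · rintro (h | h)
      · exact Or.inr h
      · exact Or.inl h
    · rintro (h | h)
      · exact Or.inr h
      · exact Or.inl h

lemma not_free_contra {W V : Type} [Fintype V] {K : SimpleGraph W} {G : SimpleGraph V}
    (f : K ↪g G) (hKconn : K.Connected) (hKedge : ∃ u v : W, K.Adj u v)
    (hne : tauc K ≠ tau K)
    (hi : ∀ S : Set V, (G.induce S).Connected → (G.induce S).edgeSet.Nonempty →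
      tauc (G.induce S) = tau (G.induce S)) : False := by
  classical
  set S := Set.range ⇑f with hS
  let e : K ≃g G.induce S := embRangeIso f
  have hconn : (G.induce S).Connected := hKconn.map e.toHom e.toEquiv.surjective
  have hedge : (G.induce S).edgeSet.Nonempty := by
    obtain ⟨u, v, huv⟩ := hKedge
    exact ⟨s(e u, e v), by rw [mem_edgeSet]; exact e.map_adj_iff.mpr huv⟩
  have h := hi S hconn hedge
  exact hne (((tauc_iso e).trans h).trans (tau_iso e).symm)
end Final

/-- The following are equivalent: (i) every connected induced subgraph `H` of `G` with
at least one edge satisfies `τ_c(H) = τ(H)`; (ii) `G` is `(P₅, C₅, C₄)`-free;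
(iii) `G` is chordal and `P₅`-free. -/
theorem poc_perfect_characterization {V : Type} [Fintype V] (G : SimpleGraph V) :
    ((∀ S : Set V, (G.induce S).Connected → (G.induce S).edgeSet.Nonempty →
        tauc (G.induce S) = tau (G.induce S)) ↔
      (HFree (SimpleGraph.pathGraph 5) G ∧ HFree (SimpleGraph.cycleGraph 5) G ∧
        HFree (SimpleGraph.cycleGraph 4) G)) ∧
    ((HFree (SimpleGraph.pathGraph 5) G ∧ HFree (SimpleGraph.cycleGraph 5) G ∧
        HFree (SimpleGraph.cycleGraph 4) G) ↔
      (Chordal G ∧ HFree (SimpleGraph.pathGraph 5) G)) := by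
  constructor
  · constructor
    · intro hi
      refine ⟨?_, ?_, ?_⟩
      · by_contra hn
        rw [HFree, not_isEmpty_iff] at hn
        obtain ⟨f⟩ := hn
        exact not_free_contra f (pathGraph_connected 4)
          ⟨0, 1, by rw [pathGraph_adj]; decide⟩ tauc_ne_tau_path5 hi
      · by_contra hn
        rw [HFree, not_isEmpty_iff] at hn
        obtain ⟨f⟩ := hn
        exact not_free_contra f (cycleGraph_connected (n := 4))
          ⟨0, 1, by rw [cycleGraph_adj']; decide⟩ tauc_ne_tau_cycle5 hi
      · by_contra hn
        rw [HFree, not_isEmpty_iff] at hn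
        obtain ⟨f⟩ := hn
        exact not_free_contra f (cycleGraph_connected (n := 3))
          ⟨0, 1, by rw [cycleGraph_adj']; decide⟩ tauc_ne_tau_cycle4 hi
    · rintro ⟨h5, hc5, hc4⟩ S hconn hedge
      haveI : Fintype ↥S := Fintype.ofFinite ↥S
      exact main_structural hconn hedge (hfree_induce h5 S) (hfree_induce hc5 S)
        (hfree_induce hc4 S)
  · constructor
    · rintro ⟨h5, hc5, hc4⟩
      refine ⟨?_, h5⟩
      intro k hk
      rcases lt_or_ge k 6 with h6 | h6
      · interval_cases k
        · exact hc4
        · exact hc5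
      · obtain ⟨m, rfl⟩ : ∃ m, k = m + 6 := ⟨k - 6, by omega⟩
        exact ⟨fun f => h5.false (f.comp (p5CycleEmbedding m))⟩
    · rintro ⟨hch, h5⟩
      exact ⟨h5, hch 5 (by omega), hch 4 (by omega)⟩
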